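/- In the infinite Levenshtein graph L_a on all finite strings over an alphabet of size a ≥ 2, a vertex u has exactly r(u) neighbors of length |u| − 1, exactly |u|·(a−1) neighbors of length |u|, and exactly a + |u|·(a−1) neighbors of length |u| + 1; hence its degree is a + r(u) + 2|u|(a−1). -/

import Mathlib

/-- Number of runs of a string: length after collapsing consecutive equal characters. -/
def numRuns {α : Type*} [DecidableEq α] (u : List α) : ℕ :=
  (u.destutter (· ≠ ·)).length

/-- Costs of the edit operations (as in the removed `Mathlib.Data.List.EditDistance.Defs`). -/
structure Levenshtein.Cost (α β δ : Type*) where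
  delete : α → δ
  insert : β → δ
  substitute : α → β → δ

/-- Unit costs: deletion and insertion cost 1, substitution costs 0 or 1. -/
def Levenshtein.defaultCost {α : Type*} [DecidableEq α] : Levenshtein.Cost α α ℕ where
  delete _ := 1
  insert _ := 1
  substitute a b := if a = b then 0 else 1

/-- Levenshtein edit distance, by the recursion the removed Mathlib definition satisfied. -/
def levenshtein {α β δ : Type*} [Add δ] [Zero δ] [Min δ] (C : Levenshtein.Cost α β δ) :
    List α → List β → δ
  | [], [] => 0
  | [], y :: ys => C.insert y + levenshtein C [] ys
  | x :: xs, [] => C.delete x + levenshtein C xs []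
  | x :: xs, y :: ys =>
      min (C.delete x + levenshtein C xs (y :: ys))
        (min (C.insert y + levenshtein C (x :: xs) ys) (C.substitute x y + levenshtein C xs ys))

/-- The infinite Levenshtein graph `L_a` on all finite strings over `Fin a`. -/
def levGraphInf (a : ℕ) : SimpleGraph (List (Fin a)) :=
  SimpleGraph.fromRel (fun u v => levenshtein Levenshtein.defaultCost u v = 1)

@[simp] theorem levenshtein_nil_nil {α β δ : Type*} [Add δ] [Zero δ] [Min δ]
    (C : Levenshtein.Cost α β δ) : levenshtein C [] [] = 0 := by rw [levenshtein]

@[simp] theorem levenshtein_nil_cons {α β δ : Type*} [Add δ] [Zero δ] [Min δ]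
    (C : Levenshtein.Cost α β δ) (y : β) (ys : List β) :
    levenshtein C [] (y :: ys) = C.insert y + levenshtein C [] ys := by rw [levenshtein]

@[simp] theorem levenshtein_cons_nil {α β δ : Type*} [Add δ] [Zero δ] [Min δ]
    (C : Levenshtein.Cost α β δ) (x : α) (xs : List α) :
    levenshtein C (x :: xs) [] = C.delete x + levenshtein C xs [] := by rw [levenshtein]

theorem levenshtein_cons_cons {α β δ : Type*} [Add δ] [Zero δ] [Min δ]
    (C : Levenshtein.Cost α β δ) (x : α) (xs : List α) (y : β) (ys : List β) :
    levenshtein C (x :: xs) (y :: ys) =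
      min (C.delete x + levenshtein C xs (y :: ys))
        (min (C.insert y + levenshtein C (x :: xs) ys) (C.substitute x y + levenshtein C xs ys)) := by
  rw [levenshtein]

@[simp] theorem Levenshtein.defaultCost_delete {α : Type*} [DecidableEq α] (a : α) :
    (Levenshtein.defaultCost : Levenshtein.Cost α α ℕ).delete a = 1 := rfl

@[simp] theorem Levenshtein.defaultCost_insert {α : Type*} [DecidableEq α] (a : α) :
    (Levenshtein.defaultCost : Levenshtein.Cost α α ℕ).insert a = 1 := rfl

@[simp] theorem Levenshtein.defaultCost_substitute {α : Type*} [DecidableEq α] (a b : α) :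
    (Levenshtein.defaultCost : Levenshtein.Cost α α ℕ).substitute a b = if a = b then 0 else 1 := rfl

open Levenshtein


set_option linter.unusedSectionVars false
variable {α : Type*} [DecidableEq α]

lemma lev_self (u : List α) : levenshtein defaultCost u u = 0 := by
  induction u with
  | nil => simp
  | cons x xs ih =>
    simp only [levenshtein_cons_cons]
    refine le_antisymm ?_ (Nat.zero_le _)
    refine le_trans (min_le_right _ _) (le_trans (min_le_right _ _) ?_)
    simp [ih]

lemma lev_eq_zero {u v : List α} (h : levenshtein defaultCost u v = 0) : u = v := by
  induction u generalizing v with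
  | nil =>
    cases v with
    | nil => rfl
    | cons y ys => simp [levenshtein_nil_cons] at h
  | cons x xs ih =>
    cases v with
    | nil => simp [levenshtein_cons_nil] at h
    | cons y ys =>
      simp only [levenshtein_cons_cons, Nat.min_eq_zero_iff, Nat.add_eq_zero, defaultCost_delete, defaultCost_insert] at h
      rcases h with ⟨h1, -⟩ | ⟨h1, -⟩ | ⟨hs, h2⟩
      · exact absurd h1 one_ne_zero
      · exact absurd h1 one_ne_zero
      · have : x = y := by by_contra hne; simp [hne] at hs
        subst this
        rw [ih h2]

/-- Finset of one-deletion results. -/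
def delsF : List α → Finset (List α)
  | [] => ∅
  | x :: xs => insert xs ((delsF xs).image (x :: ·))

variable [Fintype α]

/-- Finset of one-substitution (proper) results. -/
def subsF : List α → Finset (List α)
  | [] => ∅
  | x :: xs => ((Finset.univ.erase x).image (· :: xs)) ∪ ((subsF xs).image (x :: ·))

/-- Finset of one-insertion results. -/
def insF : List α → Finset (List α)
  | [] => Finset.univ.image ([·])
  | x :: xs => (Finset.univ.image (· :: x :: xs)) ∪ ((insF xs).image (x :: ·))

lemma length_of_mem_delsF {u v : List α} (h : v ∈ delsF u) : v.length + 1 = u.length := by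
  induction u generalizing v with
  | nil => simp [delsF] at h
  | cons x xs ih =>
    simp only [delsF, Finset.mem_insert, Finset.mem_image] at h
    rcases h with rfl | ⟨w, hw, rfl⟩
    · simp
    · simp [ih hw]

lemma length_of_mem_subsF {u v : List α} (h : v ∈ subsF u) : v.length = u.length := by
  induction u generalizing v with
  | nil => simp [subsF] at h
  | cons x xs ih =>
    simp only [subsF, Finset.mem_union, Finset.mem_image] at h
    rcases h with ⟨c, hc, rfl⟩ | ⟨w, hw, rfl⟩
    · simp
    · simp [ih hw]

lemma length_of_mem_insF {u v : List α} (h : v ∈ insF u) : v.length = u.length + 1 := by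
  induction u generalizing v with
  | nil => simp only [insF, Finset.mem_image] at h; obtain ⟨c, -, rfl⟩ := h; simp
  | cons x xs ih =>
    simp only [insF, Finset.mem_union, Finset.mem_image] at h
    rcases h with ⟨c, hc, rfl⟩ | ⟨w, hw, rfl⟩
    · simp
    · simp [ih hw]

lemma ne_of_mem_subsF {u v : List α} (h : v ∈ subsF u) : v ≠ u := by
  induction u generalizing v with
  | nil => simp [subsF] at h
  | cons x xs ih =>
    simp only [subsF, Finset.mem_union, Finset.mem_image, Finset.mem_erase] at h
    rcases h with ⟨c, ⟨hc, -⟩, rfl⟩ | ⟨w, hw, rfl⟩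
    · simp [hc]
    · simp [ih hw]

lemma cons_self_mem_insF (x : α) (u : List α) : x :: u ∈ insF u := by
  cases u with
  | nil => simp [insF]
  | cons y ys => simp [insF]

lemma mem_insF_of_mem_delsF {u v : List α} (h : v ∈ delsF u) : u ∈ insF v := by
  induction u generalizing v with
  | nil => simp [delsF] at h
  | cons x xs ih =>
    simp only [delsF, Finset.mem_insert, Finset.mem_image] at h
    rcases h with rfl | ⟨w, hw, rfl⟩
    · exact cons_self_mem_insF x v
    · simp only [insF, Finset.mem_union, Finset.mem_image]
      exact Or.inr ⟨xs, ih hw, rfl⟩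

lemma mem_delsF_of_mem_insF {u v : List α} (h : v ∈ insF u) : u ∈ delsF v := by
  induction u generalizing v with
  | nil =>
    simp only [insF, Finset.mem_image] at h
    obtain ⟨c, -, rfl⟩ := h
    simp [delsF]
  | cons x xs ih =>
    simp only [insF, Finset.mem_union, Finset.mem_image] at h
    rcases h with ⟨c, -, rfl⟩ | ⟨w, hw, rfl⟩
    · simp [delsF]
    · simp only [delsF, Finset.mem_insert, Finset.mem_image]
      exact Or.inr ⟨xs, ih hw, rfl⟩

lemma mem_subsF_symm {u v : List α} (h : v ∈ subsF u) : u ∈ subsF v := by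
  induction u generalizing v with
  | nil => simp [subsF] at h
  | cons x xs ih =>
    simp only [subsF, Finset.mem_union, Finset.mem_image, Finset.mem_erase] at h
    rcases h with ⟨c, ⟨hc, -⟩, rfl⟩ | ⟨w, hw, rfl⟩
    · simp only [subsF, Finset.mem_union, Finset.mem_image, Finset.mem_erase]
      exact Or.inl ⟨x, ⟨Ne.symm hc, Finset.mem_univ x⟩, rfl⟩
    · simp only [subsF, Finset.mem_union, Finset.mem_image]
      exact Or.inr ⟨xs, ih hw, rfl⟩

lemma lev_le_one_of_mem_delsF {u v : List α} (h : v ∈ delsF u) :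
    levenshtein defaultCost u v ≤ 1 := by
  induction u generalizing v with
  | nil => simp [delsF] at h
  | cons x xs ih =>
    simp only [delsF, Finset.mem_insert, Finset.mem_image] at h
    rcases h with rfl | ⟨w, hw, rfl⟩
    · cases v with
      | nil => simp
      | cons y ys =>
        calc levenshtein defaultCost (x :: y :: ys) (y :: ys)
            ≤ defaultCost.delete x + levenshtein defaultCost (y :: ys) (y :: ys) := by
              rw [levenshtein_cons_cons]; exact min_le_left _ _
          _ ≤ 1 := by simp [lev_self]
    · calc levenshtein defaultCost (x :: xs) (x :: w)
          ≤ defaultCost.substitute x x + levenshtein defaultCost xs w := by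
            rw [levenshtein_cons_cons]
            exact le_trans (min_le_right _ _) (min_le_right _ _)
        _ ≤ 1 := by simpa using ih hw

lemma lev_le_one_of_mem_subsF {u v : List α} (h : v ∈ subsF u) :
    levenshtein defaultCost u v ≤ 1 := by
  induction u generalizing v with
  | nil => simp [subsF] at h
  | cons x xs ih =>
    simp only [subsF, Finset.mem_union, Finset.mem_image, Finset.mem_erase] at h
    rcases h with ⟨c, ⟨hc, -⟩, rfl⟩ | ⟨w, hw, rfl⟩
    · calc levenshtein defaultCost (x :: xs) (c :: xs)
          ≤ defaultCost.substitute x c + levenshtein defaultCost xs xs := by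
            rw [levenshtein_cons_cons]
            exact le_trans (min_le_right _ _) (min_le_right _ _)
        _ ≤ 1 := by simp only [defaultCost_substitute, lev_self, add_zero]; split <;> omega
    · calc levenshtein defaultCost (x :: xs) (x :: w)
          ≤ defaultCost.substitute x x + levenshtein defaultCost xs w := by
            rw [levenshtein_cons_cons]
            exact le_trans (min_le_right _ _) (min_le_right _ _)
        _ ≤ 1 := by simpa using ih hw

lemma lev_le_one_of_mem_insF {u v : List α} (h : v ∈ insF u) :
    levenshtein defaultCost u v ≤ 1 := by
  induction u generalizing v with
  | nil =>
    simp only [insF, Finset.mem_image] at h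
    obtain ⟨c, -, rfl⟩ := h
    simp
  | cons x xs ih =>
    simp only [insF, Finset.mem_union, Finset.mem_image] at h
    rcases h with ⟨c, -, rfl⟩ | ⟨w, hw, rfl⟩
    · calc levenshtein defaultCost (x :: xs) (c :: x :: xs)
          ≤ defaultCost.insert c + levenshtein defaultCost (x :: xs) (x :: xs) := by
            rw [levenshtein_cons_cons]
            exact le_trans (min_le_right _ _) (min_le_left _ _)
        _ ≤ 1 := by simp [lev_self]
    · calc levenshtein defaultCost (x :: xs) (x :: w)
          ≤ defaultCost.substitute x x + levenshtein defaultCost xs w := by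
            rw [levenshtein_cons_cons]
            exact le_trans (min_le_right _ _) (min_le_right _ _)
        _ ≤ 1 := by simpa using ih hw

lemma mem_of_lev_le_one {u v : List α} (h : levenshtein defaultCost u v ≤ 1) :
    v = u ∨ v ∈ delsF u ∨ v ∈ subsF u ∨ v ∈ insF u := by
  induction u generalizing v with
  | nil =>
    cases v with
    | nil => exact Or.inl rfl
    | cons y ys =>
      simp only [levenshtein_nil_cons, defaultCost_insert] at h
      have h0 : levenshtein defaultCost ([] : List α) ys = 0 := by omega
      have := lev_eq_zero h0
      subst this
      exact Or.inr (Or.inr (Or.inr (by simp [insF])))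
  | cons x xs ih =>
    cases v with
    | nil =>
      simp only [levenshtein_cons_nil, defaultCost_delete] at h
      have h0 : levenshtein defaultCost xs ([] : List α) = 0 := by omega
      have := (lev_eq_zero h0)
      subst this
      exact Or.inr (Or.inl (by simp [delsF]))
    | cons y ys =>
      rw [levenshtein_cons_cons, min_le_iff, min_le_iff] at h
      simp only [defaultCost_delete, defaultCost_insert, defaultCost_substitute] at h
      rcases h with h | h | h
      · have h0 : levenshtein defaultCost xs (y :: ys) = 0 := by omega
        have := lev_eq_zero h0
        subst this
        exact Or.inr (Or.inl (by simp [delsF]))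
      · have h0 : levenshtein defaultCost (x :: xs) ys = 0 := by omega
        have := lev_eq_zero h0
        subst this
        exact Or.inr (Or.inr (Or.inr (by simp [insF])))
      · by_cases hxy : x = y
        · subst hxy
          rw [if_pos rfl, zero_add] at h
          rcases ih h with rfl | hm | hm | hm
          · exact Or.inl rfl
          · exact Or.inr (Or.inl (by
              simp only [delsF, Finset.mem_insert, Finset.mem_image]
              exact Or.inr ⟨ys, hm, rfl⟩))
          · exact Or.inr (Or.inr (Or.inl (by
              simp only [subsF, Finset.mem_union, Finset.mem_image]
              exact Or.inr ⟨ys, hm, rfl⟩)))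
          · exact Or.inr (Or.inr (Or.inr (by
              simp only [insF, Finset.mem_union, Finset.mem_image]
              exact Or.inr ⟨ys, hm, rfl⟩)))
        · rw [if_neg hxy] at h
          have h0 : levenshtein defaultCost xs ys = 0 := by omega
          have := lev_eq_zero h0
          subst this
          refine Or.inr (Or.inr (Or.inl ?_))
          simp only [subsF, Finset.mem_union, Finset.mem_image, Finset.mem_erase]
          exact Or.inl ⟨y, ⟨Ne.symm hxy, Finset.mem_univ y⟩, rfl⟩

lemma lev_eq_one_iff {u v : List α} :
    levenshtein defaultCost u v = 1 ↔ (v ∈ delsF u ∨ v ∈ subsF u ∨ v ∈ insF u) := by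
  constructor
  · intro h
    rcases mem_of_lev_le_one h.le with rfl | hm | hm | hm
    · rw [lev_self] at h; exact absurd h zero_ne_one
    · exact Or.inl hm
    · exact Or.inr (Or.inl hm)
    · exact Or.inr (Or.inr hm)
  · intro hm
    have hle : levenshtein defaultCost u v ≤ 1 := by
      rcases hm with hm | hm | hm
      · exact lev_le_one_of_mem_delsF hm
      · exact lev_le_one_of_mem_subsF hm
      · exact lev_le_one_of_mem_insF hm
    have hne : u ≠ v := by
      rcases hm with hm | hm | hm
      · have := length_of_mem_delsF hm; intro e; subst e; omega
      · exact fun e => ne_of_mem_subsF hm e.symm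
      · have := length_of_mem_insF hm; intro e; subst e; omega
    have h0 : levenshtein defaultCost u v ≠ 0 := fun h => hne (lev_eq_zero h)
    omega

lemma adj_iff (a : ℕ) (u v : List (Fin a)) :
    (levGraphInf a).Adj u v ↔ (v ∈ delsF u ∨ v ∈ subsF u ∨ v ∈ insF u) := by
  rw [levGraphInf, SimpleGraph.fromRel_adj]
  constructor
  · rintro ⟨hne, h | h⟩
    · exact lev_eq_one_iff.mp h
    · rcases lev_eq_one_iff.mp h with hm | hm | hm
      · exact Or.inr (Or.inr (mem_insF_of_mem_delsF hm))
      · exact Or.inr (Or.inl (mem_subsF_symm hm))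
      · exact Or.inl (mem_delsF_of_mem_insF hm)
  · intro hm
    refine ⟨?_, Or.inl (lev_eq_one_iff.mpr hm)⟩
    rcases hm with hm | hm | hm
    · have := length_of_mem_delsF hm; intro e; subst e; omega
    · exact fun e => ne_of_mem_subsF hm e.symm
    · have := length_of_mem_insF hm; intro e; subst e; omega

lemma cons_right_injective (xs : List α) : Function.Injective (fun c : α => c :: xs) :=
  fun c d h => by injection h

lemma singleton_injective' : Function.Injective (fun c : α => [c]) :=
  fun c d h => by injection h

lemma card_delsF (u : List α) : (delsF u).card = numRuns u := by
  induction u with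
  | nil => simp [delsF, numRuns]
  | cons x xs ih =>
    cases xs with
    | nil => simp [delsF, numRuns, List.destutter]
    | cons y t =>
      by_cases hxy : x = y
      · subst hxy
        have hmem : (x :: t) ∈ (delsF (x :: t)).image (x :: ·) :=
          Finset.mem_image.mpr ⟨t, by simp [delsF], rfl⟩
        rw [delsF, Finset.insert_eq_self.mpr hmem,
          Finset.card_image_of_injective _ (List.cons_injective), ih]
        simp only [numRuns, List.destutter_cons', List.destutter']
        simp
      · have hmem : (y :: t) ∉ (delsF (y :: t)).image (x :: ·) := by
          simp only [Finset.mem_image, not_exists, not_and]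
          rintro w - hw
          injection hw with h1 h2
          exact hxy h1
        rw [delsF, Finset.card_insert_of_notMem hmem,
          Finset.card_image_of_injective _ (List.cons_injective), ih]
        show numRuns (y :: t) + 1 = numRuns (x :: y :: t)
        simp only [numRuns, List.destutter_cons']
        rw [List.destutter'_cons_pos _ (by exact hxy)]
        simp [add_comm]

lemma card_subsF (u : List α) : (subsF u).card = u.length * (Fintype.card α - 1) := by
  induction u with
  | nil => simp [subsF]
  | cons x xs ih =>
    have hdisj : Disjoint ((Finset.univ.erase x).image (· :: xs)) ((subsF xs).image (x :: ·)) := by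
      rw [Finset.disjoint_left]
      rintro v hv hv'
      obtain ⟨c, hc, rfl⟩ := Finset.mem_image.mp hv
      obtain ⟨w, -, hw⟩ := Finset.mem_image.mp hv'
      exact (Finset.mem_erase.mp hc).1 (by injection hw.symm)
    rw [subsF, Finset.card_union_of_disjoint hdisj,
      Finset.card_image_of_injective _ (cons_right_injective xs),
      Finset.card_image_of_injective _ (List.cons_injective),
      Finset.card_erase_of_mem (Finset.mem_univ x), Finset.card_univ, ih]
    simp [List.length_cons, add_mul, add_comm]

lemma insF_cons (x : α) (xs : List α) :
    insF (x :: xs) = ((Finset.univ.erase x).image (· :: x :: xs)) ∪ ((insF xs).image (x :: ·)) := by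
  ext v
  simp only [insF, Finset.mem_union, Finset.mem_image, Finset.mem_erase]
  constructor
  · rintro (⟨c, -, rfl⟩ | ⟨w, hw, rfl⟩)
    · by_cases hcx : c = x
      · subst hcx
        exact Or.inr ⟨c :: xs, cons_self_mem_insF c xs, rfl⟩
      · exact Or.inl ⟨c, ⟨hcx, Finset.mem_univ c⟩, rfl⟩
    · exact Or.inr ⟨w, hw, rfl⟩
  · rintro (⟨c, -, rfl⟩ | ⟨w, hw, rfl⟩)
    · exact Or.inl ⟨c, Finset.mem_univ c, rfl⟩
    · exact Or.inr ⟨w, hw, rfl⟩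

lemma card_insF (u : List α) :
    (insF u).card = Fintype.card α + u.length * (Fintype.card α - 1) := by
  induction u with
  | nil =>
    simp only [insF, List.length_nil, zero_mul, add_zero]
    rw [Finset.card_image_of_injective _ singleton_injective', Finset.card_univ]
  | cons x xs ih =>
    have hdisj : Disjoint ((Finset.univ.erase x).image (· :: x :: xs))
        ((insF xs).image (x :: ·)) := by
      rw [Finset.disjoint_left]
      rintro v hv hv'
      obtain ⟨c, hc, rfl⟩ := Finset.mem_image.mp hv
      obtain ⟨w, -, hw⟩ := Finset.mem_image.mp hv'
      exact (Finset.mem_erase.mp hc).1 (by injection hw.symm)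
    rw [insF_cons, Finset.card_union_of_disjoint hdisj,
      Finset.card_image_of_injective _ (cons_right_injective (x :: xs)),
      Finset.card_image_of_injective _ (List.cons_injective),
      Finset.card_erase_of_mem (Finset.mem_univ x), Finset.card_univ, ih]
    have h1 : 1 ≤ Fintype.card α := Fintype.card_pos_iff.mpr ⟨x⟩
    simp only [List.length_cons, add_mul, one_mul]
    omega

/-- in `L_a` (a ≥ 2), a vertex `u` has `r(u)` neighbors of length
`|u| − 1`, `|u|(a−1)` neighbors of length `|u|`, and `a + |u|(a−1)` neighbors of
length `|u| + 1`; hence its degree is `a + r(u) + 2|u|(a−1)`. -/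
theorem levGraphInf_neighbor_counts (a : ℕ) (ha : 2 ≤ a) (u : List (Fin a)) :
    {v | (levGraphInf a).Adj u v ∧ v.length = u.length - 1}.ncard = numRuns u ∧
    {v | (levGraphInf a).Adj u v ∧ v.length = u.length}.ncard = u.length * (a - 1) ∧
    {v | (levGraphInf a).Adj u v ∧ v.length = u.length + 1}.ncard = a + u.length * (a - 1) ∧
    ((levGraphInf a).neighborSet u).ncard = a + numRuns u + 2 * u.length * (a - 1) := by
  have hsub0 : u ≠ [] → (0 : ℕ) < u.length := fun h => List.length_pos_iff.mpr h
  have hdel : {v | (levGraphInf a).Adj u v ∧ v.length = u.length - 1} = ↑(delsF u) := by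
    ext v
    simp only [Set.mem_setOf_eq, Finset.mem_coe, adj_iff]
    constructor
    · rintro ⟨hm | hm | hm, hl⟩
      · exact hm
      · exfalso
        have h1 := length_of_mem_subsF hm
        have h2 : u.length = 0 := by omega
        have : u = [] := List.length_eq_zero_iff.mp h2
        subst this
        simpa [subsF] using hm
      · have h1 := length_of_mem_insF hm
        omega
    · intro hm
      have h1 := length_of_mem_delsF hm
      exact ⟨Or.inl hm, by omega⟩
  have hsub : {v | (levGraphInf a).Adj u v ∧ v.length = u.length} = ↑(subsF u) := by
    ext v
    simp only [Set.mem_setOf_eq, Finset.mem_coe, adj_iff]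
    constructor
    · rintro ⟨hm | hm | hm, hl⟩
      · have h1 := length_of_mem_delsF hm; omega
      · exact hm
      · have h1 := length_of_mem_insF hm; omega
    · intro hm
      exact ⟨Or.inr (Or.inl hm), length_of_mem_subsF hm⟩
  have hins : {v | (levGraphInf a).Adj u v ∧ v.length = u.length + 1} = ↑(insF u) := by
    ext v
    simp only [Set.mem_setOf_eq, Finset.mem_coe, adj_iff]
    constructor
    · rintro ⟨hm | hm | hm, hl⟩
      · have h1 := length_of_mem_delsF hm; omega
      · have h1 := length_of_mem_subsF hm; omega
      · exact hm
    · intro hm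
      exact ⟨Or.inr (Or.inr hm), length_of_mem_insF hm⟩
  have hnb : (levGraphInf a).neighborSet u = ↑(delsF u ∪ subsF u ∪ insF u) := by
    ext v
    simp only [SimpleGraph.mem_neighborSet, Finset.coe_union, Set.mem_union, Finset.mem_coe,
      adj_iff]
    tauto
  have hd1 : Disjoint (delsF u) (subsF u) := by
    rw [Finset.disjoint_left]
    intro v hv hv'
    have := length_of_mem_delsF hv
    have := length_of_mem_subsF hv'
    omega
  have hd2 : Disjoint (delsF u ∪ subsF u) (insF u) := by
    rw [Finset.disjoint_left]
    intro v hv hv'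
    have h3 := length_of_mem_insF hv'
    rcases Finset.mem_union.mp hv with h | h
    · have := length_of_mem_delsF h; omega
    · have := length_of_mem_subsF h; omega
  have hcf : Fintype.card (Fin a) = a := Fintype.card_fin a
  have c1 : {v | (levGraphInf a).Adj u v ∧ v.length = u.length - 1}.ncard = numRuns u := by
    rw [hdel, Set.ncard_coe_finset, card_delsF]
  have c2 : {v | (levGraphInf a).Adj u v ∧ v.length = u.length}.ncard = u.length * (a - 1) := by
    rw [hsub, Set.ncard_coe_finset, card_subsF, hcf]
  have c3 : {v | (levGraphInf a).Adj u v ∧ v.length = u.length + 1}.ncard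
      = a + u.length * (a - 1) := by
    rw [hins, Set.ncard_coe_finset, card_insF, hcf]
  refine ⟨c1, c2, c3, ?_⟩
  rw [hnb, Set.ncard_coe_finset, Finset.card_union_of_disjoint hd2,
    Finset.card_union_of_disjoint hd1, card_delsF, card_subsF, card_insF, hcf]
  have : 2 * u.length * (a - 1) = u.length * (a - 1) + u.length * (a - 1) := by ring
  omega
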